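/- Let A₁, ..., Aₙ be pairwise commuting bounded linear operators on a complex Hilbert space H such that all of them, except possibly Aₙ, are normal. Then |A₁A₂⋯Aₙ| = |A₁||A₂|⋯|Aₙ|. -/

import Mathlib

open NormedSpace

section Fuglede

variable {A : Type*} [NormedRing A] [NormedAlgebra ℂ A] [StarRing A] [CStarRing A]
  [StarModule ℂ A] [CompleteSpace A]

/-- **Fuglede's theorem**: if `N` is normal and commutes with `M`, then `star N`
commutes with `M`. -/
lemma fuglede_commute {N M : A} (hN : IsStarNormal N) (h : Commute N M) :
    Commute (star N) M := by
  rcases subsingleton_or_nontrivial A with hA | hA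
  · exact Subsingleton.elim _ _
  let +nondep : NormedAlgebra ℚ A := .restrictScalars ℚ ℂ A
  have hNs : Commute N (star N) := hN.star_comm_self.symm
  set c : A := star N with hc
  set f : ℂ → A := fun z => exp (z • c) * M * exp (-(z • c)) with hf
  have hdiff : Differentiable ℂ f := by
    have d1 : Differentiable ℂ fun z : ℂ => exp (z • c) := fun z =>
      (hasDerivAt_exp_smul_const (𝕂 := ℂ) c z).differentiableAt
    have d2 : Differentiable ℂ fun z : ℂ => exp (-(z • c)) := by
      have : (fun z : ℂ => exp (-(z • c))) = (fun z : ℂ => exp (z • c)) ∘ Neg.neg := by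
        ext z; simp [neg_smul]
      rw [this]
      exact d1.comp differentiable_neg
    exact (d1.mul_const M).mul d2
  have hbound : ∀ z : ℂ, ‖f z‖ = ‖M‖ := by
    intro z
    set w : A := (starRingEnd ℂ z) • N with hw
    set S : A := z • c - w with hS
    have hskew : S ∈ skewAdjoint A := by
      rw [skewAdjoint.mem_iff]
      show star (z • star N - (starRingEnd ℂ z) • N) = -(z • star N - (starRingEnd ℂ z) • N)
      simp only [star_sub, star_smul, star_star, neg_sub, starRingEnd_apply]
    have hc1 : Commute (z • c) w := (hNs.symm.smul_left z).smul_right _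
    have hMN : Commute M w := h.symm.smul_right _
    have hsplit : exp S = exp (z • c) * exp (-w) := by
      rw [hS, sub_eq_add_neg, exp_add_of_commute hc1.neg_right]
    have hsplit' : exp (-S) = exp w * exp (-(z • c)) := by
      rw [hS, neg_sub, sub_eq_add_neg, exp_add_of_commute hc1.symm.neg_right]
    have h1 : exp (-w) * M = M * exp (-w) := (hMN.neg_right.exp_right).symm
    have h2 : exp (-w) * exp w = 1 := by
      rw [← exp_add_of_commute (Commute.refl w).neg_left, neg_add_cancel,
        NormedSpace.exp_zero]
    have hfz : f z = exp S * M * exp (-S) := by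
      rw [hsplit, hsplit', hf]
      symm
      calc exp (z • c) * exp (-w) * M * (exp w * exp (-(z • c)))
          = exp (z • c) * (exp (-w) * M) * (exp w * exp (-(z • c))) := by
            rw [mul_assoc (exp (z • c))]
        _ = exp (z • c) * (M * exp (-w)) * (exp w * exp (-(z • c))) := by rw [h1]
        _ = exp (z • c) * M * (exp (-w) * exp w * exp (-(z • c))) := by
            simp only [mul_assoc]
        _ = exp (z • c) * M * exp (-(z • c)) := by rw [h2, one_mul]
    have hU : exp S ∈ unitary A := exp_mem_unitary_of_mem_skewAdjoint hskew
    have hU' : exp (-S) ∈ unitary A :=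
      exp_mem_unitary_of_mem_skewAdjoint (neg_mem hskew)
    rw [hfz, mul_assoc, CStarRing.norm_coe_unitary_mul ⟨_, hU⟩,
      CStarRing.norm_mul_coe_unitary M ⟨_, hU'⟩]
  have hb : Bornology.IsBounded (Set.range f) := by
    apply (Metric.isBounded_closedBall (x := (0 : A)) (r := ‖M‖)).subset
    rintro - ⟨z, rfl⟩
    simpa [dist_zero_right] using (hbound z).le
  have hf0 : f 0 = M := by simp [hf, NormedSpace.exp_zero]
  have hconst : ∀ z : ℂ, f z = M := fun z =>
    (hdiff.apply_eq_apply_of_bounded hb z 0).trans hf0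
  have hcomm' : ∀ z : ℂ, exp (z • c) * M = M * exp (z • c) := by
    intro z
    have h2 : exp (-(z • c)) * exp (z • c) = 1 := by
      rw [← exp_add_of_commute (Commute.refl (z • c)).neg_left, neg_add_cancel,
        NormedSpace.exp_zero]
    calc exp (z • c) * M
        = exp (z • c) * M * (exp (-(z • c)) * exp (z • c)) := by rw [h2, mul_one]
      _ = f z * exp (z • c) := by rw [hf]; simp only [mul_assoc]
      _ = M * exp (z • c) := by rw [hconst z]
  have h1 : HasDerivAt (fun z : ℂ => exp (z • c) * M) (c * M) 0 := by
    have := (hasDerivAt_exp_smul_const' (𝕂 := ℂ) c 0).mul_const M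
    simpa only [zero_smul, NormedSpace.exp_zero, mul_one] using this
  have h2 : HasDerivAt (fun z : ℂ => M * exp (z • c)) (M * c) 0 := by
    have := (hasDerivAt_exp_smul_const' (𝕂 := ℂ) c 0).const_mul M
    simpa only [zero_smul, NormedSpace.exp_zero, mul_one] using this
  exact h1.unique (h2.congr_of_eventuallyEq (Filter.Eventually.of_forall fun z => hcomm' z))

end Fuglede

section CfcCommute

open scoped ContinuousFunctionalCalculus

variable {A : Type*} [CStarAlgebra A] [PartialOrder A] [StarOrderedRing A]

/-- An element commuting with a selfadjoint element `a` commutes with any real continuous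
function of `a`. -/
lemma commute_cfc_real {a b : A} (ha : IsSelfAdjoint a) (hab : Commute a b) (f : ℝ → ℝ) :
    Commute (cfc f a) b := by
  by_cases hf : ContinuousOn f (spectrum ℝ a)
  · rw [cfc_apply f a ha hf]
    set φ := cfcHom ha (R := ℝ) with hφ
    set T : Subalgebra ℝ C(spectrum ℝ a, ℝ) :=
      (Subalgebra.centralizer ℝ {b}).comap φ.toAlgHom with hT
    have hX : (Polynomial.toContinuousMapOnAlgHom (spectrum ℝ a)) Polynomial.X ∈ T := by
      have hXid : (Polynomial.toContinuousMapOnAlgHom (spectrum ℝ a)) Polynomial.X =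
          (ContinuousMap.id ℝ).restrict (spectrum ℝ a) := by
        ext x; simp
      simp only [hT, Subalgebra.mem_comap, Subalgebra.mem_centralizer_iff]
      intro y hy
      rw [Set.mem_singleton_iff] at hy
      subst hy
      show y * φ _ = φ _ * y
      rw [hXid]
      show y * φ _ = φ _ * y
      rw [cfcHom_id ha]
      exact hab.symm
    have hle : polynomialFunctions (spectrum ℝ a) ≤ T := by
      rw [polynomialFunctions.eq_adjoin_X, Algebra.adjoin_le_iff]
      simpa using hX
    have hTclosed : IsClosed (T : Set C(spectrum ℝ a, ℝ)) := by
      have hcont : Continuous φ := cfcHom_continuous ha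
      have hTeq : (T : Set C(spectrum ℝ a, ℝ)) = {g | b * φ g = φ g * b} := by
        ext g
        simp only [hT, SetLike.mem_coe, Subalgebra.mem_comap, Subalgebra.mem_centralizer_iff,
          Set.mem_singleton_iff, Set.mem_setOf_eq]
        constructor
        · intro h'; exact h' b rfl
        · intro h' y hy; subst hy; exact h'
      rw [hTeq]
      exact isClosed_eq ((continuous_mul_left b).comp hcont) ((continuous_mul_right b).comp hcont)
    have hdense := polynomialFunctions.topologicalClosure (spectrum ℝ a)
    have hmem : (ContinuousMap.mk _ hf.restrict : C(spectrum ℝ a, ℝ)) ∈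
        closure (polynomialFunctions (spectrum ℝ a) : Set C(spectrum ℝ a, ℝ)) := by
      rw [← Subalgebra.topologicalClosure_coe, hdense]
      simp
    have hmem' := closure_minimal hle hTclosed hmem
    rw [SetLike.mem_coe, hT, Subalgebra.mem_comap, Subalgebra.mem_centralizer_iff] at hmem'
    exact (hmem' b rfl).symm
  · rw [cfc_apply_of_not_continuousOn a hf]
    exact Commute.zero_left b

/-- An element commuting with a nonnegative element `a` commutes with `√a`. -/
lemma commute_sqrt {a b : A} (ha : 0 ≤ a) (hab : Commute a b) :
    Commute (CFC.sqrt a) b := by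
  rw [CFC.sqrt_eq_cfc, cfc_nnreal_eq_real NNReal.sqrt a ha]
  exact commute_cfc_real ha.isSelfAdjoint hab _

/-- The square root is multiplicative on commuting nonnegative elements. -/
lemma sqrt_comm_mul {a b : A} (ha : 0 ≤ a) (hb : 0 ≤ b) (hab : Commute a b) :
    CFC.sqrt (a * b) = CFC.sqrt a * CFC.sqrt b := by
  have h1 : Commute (CFC.sqrt a) b := commute_sqrt ha hab
  have h2 : Commute (CFC.sqrt a) (CFC.sqrt b) := (commute_sqrt hb h1.symm).symm
  have hsa : 0 ≤ CFC.sqrt a := CFC.sqrt_nonneg a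
  have hsb : 0 ≤ CFC.sqrt b := CFC.sqrt_nonneg b
  have h4 : Commute (CFC.sqrt (CFC.sqrt a)) (CFC.sqrt b) := commute_sqrt hsa h2
  have hnn : 0 ≤ CFC.sqrt a * CFC.sqrt b := by
    have h5 := star_left_conjugate_nonneg hsb (CFC.sqrt (CFC.sqrt a))
    rwa [(IsSelfAdjoint.of_nonneg (CFC.sqrt_nonneg (a := CFC.sqrt a))).star_eq,
      mul_assoc, ← h4.eq, ← mul_assoc,
      CFC.sqrt_mul_sqrt_self (CFC.sqrt a) hsa] at h5
  refine CFC.sqrt_unique ?_ hnn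
  calc CFC.sqrt a * CFC.sqrt b * (CFC.sqrt a * CFC.sqrt b)
      = CFC.sqrt a * (CFC.sqrt b * CFC.sqrt a) * CFC.sqrt b := by simp only [mul_assoc]
    _ = CFC.sqrt a * (CFC.sqrt a * CFC.sqrt b) * CFC.sqrt b := by rw [h2.symm.eq]
    _ = (CFC.sqrt a * CFC.sqrt a) * (CFC.sqrt b * CFC.sqrt b) := by simp only [mul_assoc]
    _ = a * b := by rw [CFC.sqrt_mul_sqrt_self a ha, CFC.sqrt_mul_sqrt_self b hb]

end CfcCommute

variable {H : Type*} [NormedAddCommGroup H] [InnerProductSpace ℂ H] [CompleteSpace H]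

/-- The absolute value (modulus) of a bounded operator: `|A| = √(A* A)`. -/
noncomputable def ContinuousLinearMap.abs (A : H →L[ℂ] H) : H →L[ℂ] H :=
  CFC.sqrt (star A * A)

lemma abs_mul_of_commute (X Y : H →L[ℂ] H) (hX : IsStarNormal X) (h : Commute X Y) :
    (X * Y).abs = X.abs * Y.abs := by
  have hsX : Commute (star X) Y := fuglede_commute hX h
  have hXY' : Commute X (star Y) := by simpa using hsX.star_star
  have hcY : Commute (star X * X) Y := hsX.mul_left h
  have hcsY : Commute (star X * X) (star Y) := (h.star_star).mul_left hXY'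
  have hcomm2 : Commute (star X * X) (star Y * Y) := hcsY.mul_right hcY
  have hkey : star (X * Y) * (X * Y) = (star X * X) * (star Y * Y) := by
    rw [star_mul]
    calc star Y * star X * (X * Y)
        = star Y * (star X * X * Y) := by simp only [mul_assoc]
      _ = star Y * (Y * (star X * X)) := by rw [hcY.eq]
      _ = (star Y * Y) * (star X * X) := by simp only [mul_assoc]
      _ = (star X * X) * (star Y * Y) := hcomm2.eq.symm
  rw [ContinuousLinearMap.abs, ContinuousLinearMap.abs, ContinuousLinearMap.abs, hkey]
  exact sqrt_comm_mul (star_mul_self_nonneg X) (star_mul_self_nonneg Y) hcomm2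

theorem abs_list_prod_of_commute_of_normal (n : ℕ) (A : Fin (n + 1) → H →L[ℂ] H)
    (hcomm : ∀ i j, A i * A j = A j * A i)
    (hnormal : ∀ i : Fin (n + 1), i ≠ Fin.last n → IsStarNormal (A i)) :
    (List.ofFn A).prod.abs = (List.ofFn fun i => (A i).abs).prod := by
  induction n with
  | zero => simp [List.ofFn_succ]
  | succ n ih =>
    rw [List.ofFn_succ, List.ofFn_succ (f := fun i => (A i).abs), List.prod_cons, List.prod_cons]
    set B := (List.ofFn fun i : Fin (n + 1) => A i.succ).prod with hB
    have h0B : Commute (A 0) B := by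
      apply Commute.list_prod_right
      intro x hx
      rw [List.mem_ofFn] at hx
      obtain ⟨i, rfl⟩ := hx
      exact hcomm 0 i.succ
    have h0 : IsStarNormal (A 0) := by
      apply hnormal 0
      simp [Fin.ext_iff]
    rw [abs_mul_of_commute (A 0) B h0 h0B]
    congr 1
    exact ih (fun i => A i.succ) (fun i j => hcomm i.succ j.succ)
      (fun i hi => hnormal i.succ fun hcon =>
        hi (by rwa [← Fin.succ_last, Fin.succ_inj] at hcon))
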